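/- Let J : [0,1] → ℝ be a continuously differentiable convex function with J(η) = J(1-η) for all η ∈ [0,1], and let f : [0,1] → ℝ be an invertible function whose inverse satisfies f⁻¹(-v) = 1 - f⁻¹(v) for all v in the range of f. Define φ(v) = -J(f⁻¹(v)) - (1 - f⁻¹(v))·J'(f⁻¹(v)). Then for all η ∈ [0,1], -φ(f(η)) = J(η) + (1-η)·J'(η) and -φ(-f(η)) = J(η) - η·J'(η). -/

import Mathlib

open Set

private lemma deriv_antisym_aux
    (J : ℝ → ℝ)
    (hdiff : ∀ x ∈ Icc (0:ℝ) 1, DifferentiableAt ℝ J x)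
    (hcont : ContinuousOn (deriv J) (Icc (0:ℝ) 1))
    (hJsym : ∀ η ∈ Icc (0:ℝ) 1, J η = J (1 - η)) :
    ∀ η ∈ Icc (0:ℝ) 1, deriv J (1 - η) = - deriv J η := by
  have key : ∀ η ∈ Ioo (0:ℝ) 1, deriv J (1 - η) = - deriv J η := by
    intro η hη
    have hmem : Ioo (0:ℝ) 1 ∈ nhds η := Ioo_mem_nhds hη.1 hη.2
    have heq : J =ᶠ[nhds η] (fun x => J (1 - x)) := by
      filter_upwards [hmem] with x hx
      exact hJsym x (Ioo_subset_Icc_self hx)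
    have h1 : deriv J η = deriv (fun x => J (1 - x)) η := heq.deriv_eq
    have h2 : deriv (fun x => J (1 - x)) η = - deriv J (1 - η) := by
      have hd : DifferentiableAt ℝ J (1 - η) :=
        hdiff _ ⟨by linarith [hη.2], by linarith [hη.1]⟩
      have := (hd.hasDerivAt.comp η ((hasDerivAt_id η).const_sub 1))
      exact this.deriv.trans (by simp)
    rw [h1, h2]; ring
  have hneBot : (nhdsWithin (0:ℝ) (Ioo (0:ℝ) 1)).NeBot := by
    rw [← mem_closure_iff_nhdsWithin_neBot, closure_Ioo one_ne_zero.symm]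
    exact ⟨le_refl 0, zero_le_one⟩
  have key0 : deriv J 1 = - deriv J 0 := by
    have t1 : Filter.Tendsto (deriv J) (nhdsWithin (0:ℝ) (Ioo (0:ℝ) 1))
        (nhds (deriv J 0)) :=
      ((hcont 0 ⟨le_refl 0, zero_le_one⟩).mono Ioo_subset_Icc_self)
    have tmap : Filter.Tendsto (fun x : ℝ => 1 - x) (nhdsWithin (0:ℝ) (Ioo (0:ℝ) 1))
        (nhdsWithin (1:ℝ) (Icc (0:ℝ) 1)) := by
      rw [tendsto_nhdsWithin_iff]
      constructor
      · have : Filter.Tendsto (fun x : ℝ => 1 - x) (nhds 0) (nhds 1) := by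
          have h := ((by continuity : Continuous fun x : ℝ => 1 - x)).tendsto (0:ℝ)
          simpa using h
        exact this.mono_left nhdsWithin_le_nhds
      · filter_upwards [self_mem_nhdsWithin] with x hx
        exact ⟨by linarith [hx.2], by linarith [hx.1]⟩
    have t2 : Filter.Tendsto (fun x => deriv J (1 - x)) (nhdsWithin (0:ℝ) (Ioo (0:ℝ) 1))
        (nhds (deriv J 1)) := (hcont 1 ⟨zero_le_one, le_refl 1⟩).tendsto.comp tmap
    have t3 : Filter.Tendsto (fun x => deriv J (1 - x)) (nhdsWithin (0:ℝ) (Ioo (0:ℝ) 1))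
        (nhds (- deriv J 0)) := by
      have : Filter.Tendsto (fun x => - deriv J x) (nhdsWithin (0:ℝ) (Ioo (0:ℝ) 1))
          (nhds (- deriv J 0)) := t1.neg
      refine this.congr' ?_
      filter_upwards [self_mem_nhdsWithin] with x hx
      exact (key x hx).symm
    exact tendsto_nhds_unique t2 t3
  intro η hη
  rcases eq_or_lt_of_le hη.1 with h0 | h0
  · simp [← h0, key0]
  rcases eq_or_lt_of_le hη.2 with h1 | h1
  · rw [h1]; simp [key0]
  · exact key η ⟨h0, h1⟩

/-- Theorem 2 of the paper, 'if' direction: let `J` be a continuously differentiable convex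
function on `[0,1]` with `J(η) = J(1-η)`, and `f` an invertible link (with inverse `g` on the
range of `f`) satisfying `f⁻¹(-v) = 1 - f⁻¹(v)` on the range of `f`. If
`φ(v) = -J(f⁻¹(v)) - (1 - f⁻¹(v))·J'(f⁻¹(v))`, then `-φ(f(η)) = J(η) + (1-η)·J'(η)` and
`-φ(-f(η)) = J(η) - η·J'(η)` for all `η ∈ [0,1]`. -/
theorem proper_loss_from_scoring_rule
    (J : ℝ → ℝ)
    (hconv : ConvexOn ℝ (Icc (0:ℝ) 1) J)
    (hdiff : ∀ x ∈ Icc (0:ℝ) 1, DifferentiableAt ℝ J x)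
    (hcont : ContinuousOn (deriv J) (Icc (0:ℝ) 1))
    (hJsym : ∀ η ∈ Icc (0:ℝ) 1, J η = J (1 - η))
    (f g : ℝ → ℝ)
    (hfinj : InjOn f (Icc (0:ℝ) 1))
    (hg : ∀ η ∈ Icc (0:ℝ) 1, g (f η) = η)
    (hgsym : ∀ η ∈ Icc (0:ℝ) 1, g (-(f η)) = 1 - g (f η))
    (φ : ℝ → ℝ)
    (hφ : ∀ v, φ v = -J (g v) - (1 - g v) * deriv J (g v)) :
    ∀ η ∈ Icc (0:ℝ) 1,
      -φ (f η) = J η + (1 - η) * deriv J η ∧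
      -φ (-(f η)) = J η - η * deriv J η := by
  intro η hη
  have hanti := deriv_antisym_aux J hdiff hcont hJsym η hη
  constructor
  · rw [hφ, hg η hη]; ring
  · rw [hφ, hgsym η hη, hg η hη, ← hJsym η hη, hanti]; ring
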